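/- Let n ≥ 1 and L > 0. Let M : ℝ → Matrix (Fin n) (Fin n) ℂ be integrable on [0, L] such that for almost every s ∈ [0, L], M(s) is Hermitian and positive semidefinite (Re⟪M(s)x, x⟫ ≥ 0 for all x). Let f : ℝ → ℂ be measurable with |f(s)| ≤ 1 for almost every s ∈ [0, L], and assume s ↦ f(s)•M(s) is integrable on [0, L]. Then ‖∫₀ᴸ f(s)•M(s) ds‖ ≤ ‖∫₀ᴸ M(s) ds‖, where ‖·‖ is the ℓ² operator norm. -/

import Mathlib

open Matrix MeasureTheory Complex

attribute [local instance] Matrix.normedAddCommGroup Matrix.normedSpace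

noncomputable def l2opNorm {n : ℕ} (M : Matrix (Fin n) (Fin n) ℂ) : ℝ :=
  ‖(Matrix.toEuclideanCLM (𝕜 := ℂ) M : EuclideanSpace ℂ (Fin n) →L[ℂ] EuclideanSpace ℂ (Fin n))‖

lemma aux_cs {E : Type*} [NormedAddCommGroup E] [InnerProductSpace ℂ E]
    (T : E →L[ℂ] E) (hsym : ∀ u v : E, (inner ℂ (T u) v : ℂ) = inner ℂ u (T v))
    (hpos : ∀ u : E, 0 ≤ (inner ℂ u (T u) : ℂ).re) (x y : E) :
    ‖(inner ℂ x (T y) : ℂ)‖ * ‖(inner ℂ x (T y) : ℂ)‖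
      ≤ (inner ℂ x (T x) : ℂ).re * (inner ℂ y (T y) : ℂ).re := by
  let c : PreInnerProductSpace.Core ℂ E :=
  { inner := fun u v => inner ℂ u (T v)
    conj_inner_symm := fun u v => by
      show (starRingEnd ℂ) (inner ℂ v (T u)) = (inner ℂ u (T v) : ℂ)
      rw [← hsym]; exact inner_conj_symm _ _
    re_inner_nonneg := hpos
    add_left := fun u v w => by
      show (inner ℂ (u + v) (T w) : ℂ) = inner ℂ u (T w) + inner ℂ v (T w)
      exact inner_add_left _ _ _
    smul_left := fun u v r => by
      show (inner ℂ (r • u) (T v) : ℂ) = (starRingEnd ℂ) r * inner ℂ u (T v)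
      exact inner_smul_left _ _ _ }
  have h : ‖(inner ℂ x (T y) : ℂ)‖ * ‖(inner ℂ y (T x) : ℂ)‖
      ≤ (inner ℂ x (T x) : ℂ).re * (inner ℂ y (T y) : ℂ).re :=
    @InnerProductSpace.Core.inner_mul_inner_self_le ℂ E _ _ _ c x y
  have h2 : ‖(inner ℂ y (T x) : ℂ)‖ = ‖(inner ℂ x (T y) : ℂ)‖ := by
    rw [← inner_conj_symm y (T x), RCLike.norm_conj, hsym]
  calc ‖(inner ℂ x (T y) : ℂ)‖ * ‖(inner ℂ x (T y) : ℂ)‖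
      = ‖(inner ℂ x (T y) : ℂ)‖ * ‖(inner ℂ y (T x) : ℂ)‖ := by rw [h2]
    _ ≤ _ := h

/-- The continuous linear functional `N ↦ ⟪y, N x⟫` on matrices. -/
noncomputable def innerFunctional {n : ℕ} (x y : EuclideanSpace ℂ (Fin n)) :
    Matrix (Fin n) (Fin n) ℂ →L[ℂ] ℂ :=
  LinearMap.toContinuousLinearMap
  { toFun := fun N => (inner ℂ y ((Matrix.toEuclideanCLM (𝕜 := ℂ) N) x) : ℂ)
    map_add' := fun N₁ N₂ => by
      simp [map_add, ContinuousLinearMap.add_apply, inner_add_right]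
    map_smul' := fun c N => by
      simp [_root_.map_smul, ContinuousLinearMap.smul_apply, inner_smul_right] }

lemma innerFunctional_apply {n : ℕ} (x y : EuclideanSpace ℂ (Fin n))
    (N : Matrix (Fin n) (Fin n) ℂ) :
    innerFunctional x y N = (inner ℂ y ((Matrix.toEuclideanCLM (𝕜 := ℂ) N) x) : ℂ) := rfl

theorem norm_integral_smul_le_norm_integral_of_posSemidef
    {n : ℕ} (hn : 1 ≤ n) (L : ℝ) (hL : 0 < L)
    (M : ℝ → Matrix (Fin n) (Fin n) ℂ)
    (hMint : @IntervalIntegrable _ _ NormedAddGroup.toENormedAddMonoid M volume 0 L)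
    (hMpsd : ∀ᵐ s ∂volume, s ∈ Set.Icc (0 : ℝ) L →
      (M s).IsHermitian ∧
      ∀ x : EuclideanSpace ℂ (Fin n),
        0 ≤ (inner ℂ ((Matrix.toEuclideanCLM (𝕜 := ℂ) (M s)) x) x : ℂ).re)
    (f : ℝ → ℂ) (hf : Measurable f)
    (hfb : ∀ᵐ s ∂volume, s ∈ Set.Icc (0 : ℝ) L → ‖f s‖ ≤ 1)
    (hint : @IntervalIntegrable _ _ NormedAddGroup.toENormedAddMonoid (fun s => f s • M s) volume 0 L) :
    l2opNorm (∫ s in (0 : ℝ)..L, f s • M s) ≤ l2opNorm (∫ s in (0 : ℝ)..L, M s) := by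
  set μ := volume.restrict (Set.Ioc (0:ℝ) L) with hμ
  have hMI : @IntegrableOn _ _ _ _ NormedAddGroup.toENormedAddMonoid.toContinuousENorm M (Set.Ioc 0 L) volume := hMint.1
  have hintI : @IntegrableOn _ _ _ _ NormedAddGroup.toENormedAddMonoid.toContinuousENorm (fun s => f s • M s) (Set.Ioc 0 L) volume := hint.1
  set A : Matrix (Fin n) (Fin n) ℂ := ∫ s in (0:ℝ)..L, f s • M s with hA
  set B : Matrix (Fin n) (Fin n) ℂ := ∫ s in (0:ℝ)..L, M s with hB
  have hAeq : A = ∫ s, f s • M s ∂μ := intervalIntegral.integral_of_le hL.le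
  have hBeq : B = ∫ s, M s ∂μ := intervalIntegral.integral_of_le hL.le
  set TA := Matrix.toEuclideanCLM (𝕜 := ℂ) A
  set TB := Matrix.toEuclideanCLM (𝕜 := ℂ) B
  -- a.e. facts transferred to μ
  have hmem : ∀ᵐ s ∂μ, s ∈ Set.Icc (0:ℝ) L :=
    (ae_restrict_mem measurableSet_Ioc).mono fun s hs => Set.Ioc_subset_Icc_self hs
  have hMpsd' : ∀ᵐ s ∂μ, (M s).IsHermitian ∧
      ∀ x : EuclideanSpace ℂ (Fin n),
        0 ≤ (inner ℂ ((Matrix.toEuclideanCLM (𝕜 := ℂ) (M s)) x) x : ℂ).re := by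
    filter_upwards [hmem, ae_restrict_of_ae hMpsd] with s hs h using h hs
  have hfb' : ∀ᵐ s ∂μ, ‖f s‖ ≤ 1 := by
    filter_upwards [hmem, ae_restrict_of_ae hfb] with s hs h using h hs
  -- the quadratic-form functions
  set ax : (EuclideanSpace ℂ (Fin n)) → ℝ → ℝ :=
    fun x s => (innerFunctional x x (M s)).re with hax
  have haxm : ∀ x, AEStronglyMeasurable (ax x) μ := fun x =>
    (Complex.continuous_re.comp_aestronglyMeasurable
      ((innerFunctional x x).continuous.comp_aestronglyMeasurable hMI.aestronglyMeasurable))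
  have haxint : ∀ x, Integrable (ax x) μ :=
    fun x => ((innerFunctional x x).integrable_comp hMI).re
  have haxnn : ∀ x, 0 ≤ᵐ[μ] ax x := by
    intro x
    filter_upwards [hMpsd'] with s hs
    have h0 := hs.2 x
    have hc : (inner ℂ x ((Matrix.toEuclideanCLM (𝕜 := ℂ) (M s)) x) : ℂ)
        = starRingEnd ℂ (inner ℂ ((Matrix.toEuclideanCLM (𝕜 := ℂ) (M s)) x) x : ℂ) :=
      (inner_conj_symm _ _).symm
    show 0 ≤ (inner ℂ x ((Matrix.toEuclideanCLM (𝕜 := ℂ) (M s)) x) : ℂ).re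
    rw [hc, Complex.conj_re]; exact h0
  have haxB : ∀ x : EuclideanSpace ℂ (Fin n), ∫ s, ax x s ∂μ ≤ l2opNorm B * ‖x‖ ^ 2 := by
    intro x
    have h1 : ∫ s, ax x s ∂μ = (innerFunctional x x B).re := by
      have h2 := integral_re ((innerFunctional x x).integrable_comp hMI)
      simp only [RCLike.re_to_complex] at h2
      show ∫ s, (innerFunctional x x (M s)).re ∂μ = (innerFunctional x x B).re
      refine h2.trans ?_
      rw [hBeq]
      exact congrArg Complex.re (ContinuousLinearMap.integral_comp_comm _ hMI)
    rw [h1, innerFunctional_apply]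
    have h3 : (inner ℂ x (TB x) : ℂ).re ≤ ‖(inner ℂ x (TB x) : ℂ)‖ :=
      Complex.re_le_norm _
    calc (inner ℂ x (TB x) : ℂ).re ≤ ‖(inner ℂ x (TB x) : ℂ)‖ := h3
      _ ≤ ‖x‖ * ‖TB x‖ := norm_inner_le_norm _ _
      _ ≤ ‖x‖ * (‖TB‖ * ‖x‖) :=
          mul_le_mul_of_nonneg_left (TB.le_opNorm x) (norm_nonneg x)
      _ = l2opNorm B * ‖x‖ ^ 2 := by rw [l2opNorm]; ring
  have haxB_nn : ∀ x : EuclideanSpace ℂ (Fin n), 0 ≤ ∫ s, ax x s ∂μ := fun x =>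
    integral_nonneg_of_ae (haxnn x)
  -- key estimate
  have key : ∀ x y : EuclideanSpace ℂ (Fin n),
      ‖(innerFunctional x y A : ℂ)‖ ≤ l2opNorm B * ‖x‖ * ‖y‖ := by
    intro x y
    have hΦint : Integrable (fun s => innerFunctional x y (f s • M s)) μ :=
      (innerFunctional x y).integrable_comp hintI
    have step1 : ‖(innerFunctional x y A : ℂ)‖
        ≤ ∫ s, ‖innerFunctional x y (f s • M s)‖ ∂μ := by
      rw [hAeq]
      calc _ = ‖∫ s, innerFunctional x y (f s • M s) ∂μ‖ := by
            congr 1; exact (ContinuousLinearMap.integral_comp_comm _ hintI).symm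
        _ ≤ _ := norm_integral_le_integral_norm _
    have hsqx : AEStronglyMeasurable (fun s => Real.sqrt (ax x s)) μ :=
      Real.continuous_sqrt.comp_aestronglyMeasurable (haxm x)
    have hsqy : AEStronglyMeasurable (fun s => Real.sqrt (ax y s)) μ :=
      Real.continuous_sqrt.comp_aestronglyMeasurable (haxm y)
    have hprod_int : Integrable (fun s => Real.sqrt (ax x s) * Real.sqrt (ax y s)) μ := by
      refine Integrable.mono' (((haxint x).add (haxint y)).div_const 2) (hsqx.mul hsqy) ?_
      filter_upwards [haxnn x, haxnn y] with s hx0 hy0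
      simp only [Pi.zero_apply] at hx0 hy0
      rw [Real.norm_of_nonneg (mul_nonneg (Real.sqrt_nonneg _) (Real.sqrt_nonneg _))]
      simp only [Pi.add_apply]
      nlinarith [Real.sq_sqrt hx0, Real.sq_sqrt hy0,
        sq_nonneg (Real.sqrt (ax x s) - Real.sqrt (ax y s))]
    have step2 : ∫ s, ‖innerFunctional x y (f s • M s)‖ ∂μ
        ≤ ∫ s, Real.sqrt (ax x s) * Real.sqrt (ax y s) ∂μ := by
      refine integral_mono_ae hΦint.norm hprod_int ?_
      filter_upwards [hMpsd', hfb', haxnn x, haxnn y] with s hpsd hfs hx0 hy0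
      set T := Matrix.toEuclideanCLM (𝕜 := ℂ) (M s) with hT
      have hTe : ∀ u, T u = Matrix.toEuclideanLin (M s) u := fun u => by
        rw [← Matrix.coe_toEuclideanCLM_eq_toEuclideanLin]; rfl
      have hsymm : ∀ u v : EuclideanSpace ℂ (Fin n),
          (inner ℂ (T u) v : ℂ) = inner ℂ u (T v) := by
        intro u v
        have hsy := (Matrix.isHermitian_iff_isSymmetric.mp hpsd.1) u v
        rw [hTe, hTe]; exact hsy
      have hposT : ∀ u : EuclideanSpace ℂ (Fin n), 0 ≤ (inner ℂ u (T u) : ℂ).re := by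
        intro u
        have h0 := hpsd.2 u
        have hc : (inner ℂ u (T u) : ℂ) = starRingEnd ℂ (inner ℂ (T u) u : ℂ) :=
          (inner_conj_symm _ _).symm
        rw [hc, Complex.conj_re]; exact h0
      have hcs := aux_cs T hsymm hposT y x
      simp only [Pi.zero_apply] at hx0 hy0
      have hb : ‖(inner ℂ y (T x) : ℂ)‖ ≤ Real.sqrt (ax x s) * Real.sqrt (ax y s) := by
        have h1 : ‖(inner ℂ y (T x) : ℂ)‖ ≤ Real.sqrt (ax y s * ax x s) := by
          refine Real.le_sqrt_of_sq_le ?_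
          rw [sq]
          exact hcs
        calc ‖(inner ℂ y (T x) : ℂ)‖ ≤ Real.sqrt (ax y s * ax x s) := h1
          _ = Real.sqrt (ax y s) * Real.sqrt (ax x s) := Real.sqrt_mul hy0 _
          _ = Real.sqrt (ax x s) * Real.sqrt (ax y s) := mul_comm _ _
      have heq : ‖(innerFunctional x y (f s • M s) : ℂ)‖
          = ‖f s‖ * ‖(inner ℂ y (T x) : ℂ)‖ := by
        rw [_root_.map_smul, smul_eq_mul, norm_mul]; rfl
      rw [heq]
      calc ‖f s‖ * ‖(inner ℂ y (T x) : ℂ)‖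
          ≤ 1 * ‖(inner ℂ y (T x) : ℂ)‖ := by
            refine mul_le_mul_of_nonneg_right ?_ (norm_nonneg _)
            simpa using hfs
        _ = ‖(inner ℂ y (T x) : ℂ)‖ := one_mul _
        _ ≤ _ := hb
    have step3 : ∫ s, Real.sqrt (ax x s) * Real.sqrt (ax y s) ∂μ
        ≤ Real.sqrt (∫ s, ax x s ∂μ) * Real.sqrt (∫ s, ax y s ∂μ) := by
      have hpq : Real.HolderConjugate 2 2 := Real.HolderConjugate.two_two
      have h2 : ENNReal.ofReal (2:ℝ) = 2 := by norm_num
      have hmem2 : ∀ z : EuclideanSpace ℂ (Fin n),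
          MemLp (fun s => Real.sqrt (ax z s)) (ENNReal.ofReal (2:ℝ)) μ := by
        intro z
        rw [h2]
        refine (memLp_two_iff_integrable_sq
          (Real.continuous_sqrt.comp_aestronglyMeasurable (haxm z))).mpr ?_
        refine (haxint z).congr ?_
        filter_upwards [haxnn z] with s hs
        rw [Real.sq_sqrt hs]
      have hH := integral_mul_le_Lp_mul_Lq_of_nonneg hpq
        (Filter.Eventually.of_forall fun s => Real.sqrt_nonneg (ax x s))
        (Filter.Eventually.of_forall fun s => Real.sqrt_nonneg (ax y s))
        (hmem2 x) (hmem2 y)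
      have hsq : ∀ z : EuclideanSpace ℂ (Fin n),
          ∫ s, Real.sqrt (ax z s) ^ (2:ℝ) ∂μ = ∫ s, ax z s ∂μ := by
        intro z
        refine integral_congr_ae ?_
        filter_upwards [haxnn z] with s hs
        rw [show (2:ℝ) = ((2:ℕ):ℝ) by norm_num, Real.rpow_natCast, Real.sq_sqrt hs]
      rw [hsq x, hsq y] at hH
      rw [Real.sqrt_eq_rpow, Real.sqrt_eq_rpow]
      exact hH
    have step4 : Real.sqrt (∫ s, ax x s ∂μ) * Real.sqrt (∫ s, ax y s ∂μ)
        ≤ l2opNorm B * ‖x‖ * ‖y‖ := by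
      have hBnn : (0:ℝ) ≤ l2opNorm B := norm_nonneg _
      have hx1 : Real.sqrt (∫ s, ax x s ∂μ) ≤ Real.sqrt (l2opNorm B) * ‖x‖ := by
        refine le_trans (Real.sqrt_le_sqrt (haxB x)) ?_
        rw [Real.sqrt_mul hBnn, Real.sqrt_sq (norm_nonneg x)]
      have hy1 : Real.sqrt (∫ s, ax y s ∂μ) ≤ Real.sqrt (l2opNorm B) * ‖y‖ := by
        refine le_trans (Real.sqrt_le_sqrt (haxB y)) ?_
        rw [Real.sqrt_mul hBnn, Real.sqrt_sq (norm_nonneg y)]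
      calc Real.sqrt (∫ s, ax x s ∂μ) * Real.sqrt (∫ s, ax y s ∂μ)
          ≤ (Real.sqrt (l2opNorm B) * ‖x‖) * (Real.sqrt (l2opNorm B) * ‖y‖) :=
            mul_le_mul hx1 hy1 (Real.sqrt_nonneg _)
              (mul_nonneg (Real.sqrt_nonneg _) (norm_nonneg _))
        _ = (Real.sqrt (l2opNorm B) * Real.sqrt (l2opNorm B)) * ‖x‖ * ‖y‖ := by ring
        _ = l2opNorm B * ‖x‖ * ‖y‖ := by rw [Real.mul_self_sqrt hBnn]
    exact step1.trans (step2.trans (step3.trans step4))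
  -- conclude
  show l2opNorm A ≤ l2opNorm B
  refine ContinuousLinearMap.opNorm_le_bound _ (norm_nonneg _) fun x => ?_
  have hk := key x (TA x)
  have hns : ‖TA x‖ ^ 2 = (inner ℂ (TA x) (TA x) : ℂ).re := by
    have := @inner_self_eq_norm_sq ℂ _ _ _ _ (TA x)
    simp only [RCLike.re_to_complex] at this
    exact this.symm
  have hre : (inner ℂ (TA x) (TA x) : ℂ).re ≤ ‖(inner ℂ (TA x) (TA x) : ℂ)‖ :=
    Complex.re_le_norm _
  have hineq : ‖TA x‖ ^ 2 ≤ l2opNorm B * ‖x‖ * ‖TA x‖ := by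
    rw [hns]
    exact hre.trans hk
  have hBnn : (0:ℝ) ≤ l2opNorm B := norm_nonneg TB
  nlinarith [hineq, hBnn, norm_nonneg (TA x), norm_nonneg x,
    mul_nonneg hBnn (norm_nonneg x)]
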